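/- ACC_ℕ is discontinuous: there is no function F : (ℕ→ℕ) → ℕ (ℕ discrete) continuous on dom ACC_ℕ with F p ∈ ACC_ℕ p for all p ∈ dom ACC_ℕ. -/

import Mathlib

/-- The domain of a first-order problem. -/
def domFO (f : (ℕ → ℕ) → Set ℕ) : Set (ℕ → ℕ) := {p | f p ≠ ∅}

/-- The problem `ACC_ℕ`. -/
def ACCN (p : ℕ → ℕ) : Set ℕ :=
  {n | (∀ i j, p i ≠ 0 → p j ≠ 0 → p i = p j) ∧ ∀ k, p k ≠ n + 1}

theorem accn_discontinuous :
    ¬ ∃ F : (ℕ → ℕ) → ℕ,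
      ContinuousOn F (domFO ACCN) ∧ ∀ p ∈ domFO ACCN, F p ∈ ACCN p := by
  rintro ⟨F, hc, hs⟩
  set z : ℕ → ℕ := fun _ => 0 with hz
  have hzdom : z ∈ domFO ACCN := by
    intro h
    have : (0 : ℕ) ∈ ACCN z := ⟨fun i j hi _ => absurd rfl hi, fun k => by simp [hz]⟩
    rw [h] at this
    exact this
  set q : ℕ → ℕ → ℕ := fun n i => if i = n then F z + 1 else 0 with hq
  have hqdom : ∀ n, q n ∈ domFO ACCN := by
    intro n h
    have hmem : F z + 1 ∈ ACCN (q n) := by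
      refine ⟨?_, ?_⟩
      · intro i j hi hj
        simp only [hq] at hi hj ⊢
        by_cases hin : i = n <;> by_cases hjn : j = n <;> simp [hin, hjn] at hi hj ⊢
      · intro k hk
        simp only [hq] at hk
        by_cases hkn : k = n <;> simp [hkn] at hk
    rw [h] at hmem
    exact hmem
  have htend : Filter.Tendsto q Filter.atTop (nhds z) := by
    rw [tendsto_pi_nhds]
    intro i
    have : ∀ᶠ n in Filter.atTop, q n i = z i := by
      filter_upwards [Filter.eventually_gt_atTop i] with n hn
      simp [hq, hz, Nat.ne_of_lt hn]
    exact Filter.Tendsto.congr' (this.mono fun n h => h.symm) tendsto_const_nhds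
  have htend' : Filter.Tendsto q Filter.atTop (nhdsWithin z (domFO ACCN)) := by
    rw [tendsto_nhdsWithin_iff]
    exact ⟨htend, Filter.Eventually.of_forall hqdom⟩
  have hF : Filter.Tendsto (fun n => F (q n)) Filter.atTop (nhds (F z)) :=
    (hc z hzdom).tendsto.comp htend'
  have hev : ∀ᶠ n in Filter.atTop, F (q n) = F z := by
    have : {F z} ∈ nhds (F z) := by
      simp [nhds_discrete]
    filter_upwards [hF this] with n hn using hn
  obtain ⟨n, hn⟩ := hev.exists
  have h2 := (hs (q n) (hqdom n)).2 n
  rw [hn] at h2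
  simp [hq] at h2
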